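/- For any non-zero complex m×n matrix A, the discrete norm ‖A‖_Δ := max over non-zero ξ ∈ {0,1}ⁿ of ‖Aξ‖/‖ξ‖ satisfies ‖A‖/(8√2·√(log h(A) + 2)) ≤ ‖A‖_Δ ≤ ‖A‖. -/

import Mathlib

open scoped BigOperators

/-- Euclidean norm of a finitely-indexed complex vector. -/
noncomputable def en {ι : Type*} [Fintype ι] (v : ι → ℂ) : ℝ :=
  Real.sqrt (∑ i, ‖v i‖ ^ 2)

/-- The L¹ norm of a vector. -/
noncomputable def vn1 {ι : Type*} [Fintype ι] (v : ι → ℂ) : ℝ := ∑ i, ‖v i‖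

/-- The L^∞ norm of a vector. -/
noncomputable def vnInf {ι : Type*} [Fintype ι] (v : ι → ℂ) : ℝ := ⨆ i, ‖v i‖

/-- The induced L²-operator norm of a matrix. -/
noncomputable def opNorm2 {ι κ : Type*} [Fintype ι] [Fintype κ]
    (A : Matrix ι κ ℂ) : ℝ :=
  sInf {C | 0 ≤ C ∧ ∀ x : κ → ℂ, en (A.mulVec x) ≤ C * en x}

/-- The induced L¹-operator norm of a matrix. -/
noncomputable def opNorm1 {ι κ : Type*} [Fintype ι] [Fintype κ]
    (A : Matrix ι κ ℂ) : ℝ :=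
  sInf {C | 0 ≤ C ∧ ∀ x : κ → ℂ, vn1 (A.mulVec x) ≤ C * vn1 x}

/-- The induced L^∞-operator norm of a matrix. -/
noncomputable def opNormInf {ι κ : Type*} [Fintype ι] [Fintype κ]
    (A : Matrix ι κ ℂ) : ℝ :=
  sInf {C | 0 ≤ C ∧ ∀ x : κ → ℂ, vnInf (A.mulVec x) ≤ C * vnInf x}

/-- The height of a matrix: √(‖A‖₁‖A‖_∞)/‖A‖. -/
noncomputable def height {ι κ : Type*} [Fintype ι] [Fintype κ]
    (A : Matrix ι κ ℂ) : ℝ :=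
  Real.sqrt (opNorm1 A * opNormInf A) / opNorm2 A

/-- The discrete norm: max of ‖Aξ‖/‖ξ‖ over non-zero binary vectors ξ. -/
noncomputable def dnorm {ι κ : Type*} [Fintype ι] [Fintype κ]
    (A : Matrix ι κ ℂ) : ℝ :=
  sSup {r | ∃ ξ : κ → ℂ, (∀ i, ξ i = 0 ∨ ξ i = 1) ∧ ξ ≠ 0 ∧
    r = en (A.mulVec ξ) / en ξ}

/-- The discrete Rayleigh norm: max of |ξᵗAη|/(‖ξ‖‖η‖) over non-zero binary
vectors ξ, η. -/
noncomputable def pnorm {ι κ : Type*} [Fintype ι] [Fintype κ]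
    (A : Matrix ι κ ℂ) : ℝ :=
  sSup {r | ∃ (ξ : ι → ℂ) (η : κ → ℂ),
    (∀ i, ξ i = 0 ∨ ξ i = 1) ∧ ξ ≠ 0 ∧
    (∀ j, η j = 0 ∨ η j = 1) ∧ η ≠ 0 ∧
    r = ‖∑ i, ∑ j, ξ i * A i j * η j‖ / (en ξ * en η)}


namespace Stmt8Aux

variable {ι : Type*} [Fintype ι]

lemma en_nonneg (v : ι → ℂ) : 0 ≤ en v := Real.sqrt_nonneg _

lemma en_eq_norm (v : ι → ℂ) : en v = ‖(WithLp.equiv 2 (ι → ℂ)).symm v‖ := by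
  rw [EuclideanSpace.norm_eq]; rfl

lemma sq_en (v : ι → ℂ) : en v ^ 2 = ∑ i, ‖v i‖ ^ 2 :=
  Real.sq_sqrt (Finset.sum_nonneg fun i _ => by positivity)

lemma en_add_le (v w : ι → ℂ) : en (v + w) ≤ en v + en w := by
  rw [en_eq_norm, en_eq_norm, en_eq_norm]; exact norm_add_le _ _

lemma en_smul (a : ℂ) (v : ι → ℂ) : en (a • v) = ‖a‖ * en v := by
  rw [en_eq_norm, en_eq_norm]
  exact norm_smul a ((WithLp.equiv 2 (ι → ℂ)).symm v)

lemma en_zero : en (0 : ι → ℂ) = 0 := by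
  rw [en_eq_norm]; exact norm_zero

lemma en_eq_zero_iff (v : ι → ℂ) : en v = 0 ↔ v = 0 := by
  rw [en_eq_norm, norm_eq_zero]
  exact ⟨fun h => (WithLp.toLp_eq_zero 2).mp h, fun h => (WithLp.toLp_eq_zero 2).mpr h⟩

lemma coord_le_en (v : ι → ℂ) (i : ι) : ‖v i‖ ≤ en v := by
  have h1 : ‖v i‖ ^ 2 ≤ ∑ j, ‖v j‖ ^ 2 :=
    Finset.single_le_sum (f := fun j => ‖v j‖ ^ 2) (fun j _ => by positivity)
      (Finset.mem_univ i)
  calc ‖v i‖ = Real.sqrt (‖v i‖ ^ 2) := (Real.sqrt_sq (norm_nonneg _)).symm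
    _ ≤ en v := Real.sqrt_le_sqrt h1

lemma en_le_sum (v : ι → ℂ) : en v ≤ ∑ i, ‖v i‖ := by
  have h : ∑ i, ‖v i‖ ^ 2 ≤ (∑ i, ‖v i‖) ^ 2 := by
    rw [sq (∑ i, ‖v i‖)]
    rw [Finset.sum_mul]
    refine Finset.sum_le_sum fun i _ => ?_
    rw [sq]
    exact mul_le_mul_of_nonneg_left
      (Finset.single_le_sum (fun j _ => norm_nonneg _) (Finset.mem_univ i)) (norm_nonneg _)
  calc en v ≤ Real.sqrt ((∑ i, ‖v i‖) ^ 2) := Real.sqrt_le_sqrt h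
    _ = ∑ i, ‖v i‖ := Real.sqrt_sq (Finset.sum_nonneg fun i _ => norm_nonneg _)

lemma en_sum_le {α : Type*} (s : Finset α) (f : α → ι → ℂ) :
    en (∑ k ∈ s, f k) ≤ ∑ k ∈ s, en (f k) := by
  classical
  induction s using Finset.induction_on with
  | empty => simp [en_zero]
  | insert _ _ h ih =>
    rw [Finset.sum_insert h, Finset.sum_insert h]
    exact le_trans (en_add_le _ _) (by linarith)

lemma le_vnInf (v : ι → ℂ) (i : ι) : ‖v i‖ ≤ vnInf v :=
  le_ciSup (f := fun i => ‖v i‖) (Set.Finite.bddAbove (Set.finite_range _)) i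

lemma vnInf_nonneg (v : ι → ℂ) : 0 ≤ vnInf v :=
  Real.iSup_nonneg fun i => norm_nonneg _

lemma vnInf_le (v : ι → ℂ) (c : ℝ) (hc : 0 ≤ c) (h : ∀ i, ‖v i‖ ≤ c) : vnInf v ≤ c := by
  rcases isEmpty_or_nonempty ι with hι | hι
  · rw [vnInf, Real.iSup_of_isEmpty]; exact hc
  · exact ciSup_le h

lemma vnInf_eq_zero (v : ι → ℂ) (h : vnInf v = 0) : v = 0 := by
  funext i
  have := le_vnInf v i
  rw [h] at this
  exact norm_le_zero_iff.mp this

lemma vn1_nonneg (v : ι → ℂ) : 0 ≤ vn1 v := Finset.sum_nonneg fun i _ => norm_nonneg _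

lemma vn1_eq_zero (v : ι → ℂ) (h : vn1 v = 0) : v = 0 := by
  funext i
  have h2 : ∀ j ∈ Finset.univ, (0:ℝ) ≤ ‖v j‖ := fun j _ => norm_nonneg _
  have := (Finset.sum_eq_zero_iff_of_nonneg h2).mp h i (Finset.mem_univ i)
  exact norm_eq_zero.mp this

lemma en_eq_zero_of_zero (v : ι → ℂ) (h : v = 0) : en v = 0 := by rw [h]; exact en_zero

/-- 2√(ab) ≤ a + b for nonneg a b -/
lemma two_sqrt_mul_le (a b : ℝ) (ha : 0 ≤ a) (hb : 0 ≤ b) :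
    2 * Real.sqrt (a * b) ≤ a + b := by
  rw [Real.sqrt_mul ha]
  nlinarith [Real.sq_sqrt ha, Real.sq_sqrt hb, sq_nonneg (Real.sqrt a - Real.sqrt b),
    Real.sqrt_nonneg a, Real.sqrt_nonneg b]

lemma sqrt_add_sqrt_le (a b : ℝ) (ha : 0 ≤ a) (hb : 0 ≤ b) :
    Real.sqrt a + Real.sqrt b ≤ Real.sqrt (2 * (a + b)) := by
  rw [show (2:ℝ) * (a+b) = (Real.sqrt a + Real.sqrt b)^2 + (a + b - 2*Real.sqrt (a*b)) by
    rw [Real.sqrt_mul ha]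
    nlinarith [Real.sq_sqrt ha, Real.sq_sqrt hb]]
  nlinarith [Real.sqrt_le_sqrt (show (Real.sqrt a + Real.sqrt b)^2 ≤
      (Real.sqrt a + Real.sqrt b)^2 + (a + b - 2*Real.sqrt (a*b)) by
        nlinarith [two_sqrt_mul_le a b ha hb]),
    Real.sqrt_sq (by positivity : (0:ℝ) ≤ Real.sqrt a + Real.sqrt b)]

end Stmt8Aux

namespace Stmt8Aux

section MatrixLemmas

variable {m n : ℕ} (A : Matrix (Fin m) (Fin n) ℂ)

/-- total entry sum bound -/
noncomputable def Etot : ℝ := ∑ i, ∑ j, ‖A i j‖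

/-- max row sum (as ciSup) -/
noncomputable def Rr : ℝ := ⨆ i, ∑ j, ‖A i j‖

/-- max column sum -/
noncomputable def Cc : ℝ := ⨆ j, ∑ i, ‖A i j‖

lemma Etot_nonneg : 0 ≤ Etot A :=
  Finset.sum_nonneg fun i _ => Finset.sum_nonneg fun j _ => norm_nonneg _

lemma Rr_nonneg : 0 ≤ Rr A :=
  Real.iSup_nonneg fun i => Finset.sum_nonneg fun j _ => norm_nonneg _

lemma Cc_nonneg : 0 ≤ Cc A :=
  Real.iSup_nonneg fun j => Finset.sum_nonneg fun i _ => norm_nonneg _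

lemma rowsum_le_Rr (i : Fin m) : ∑ j, ‖A i j‖ ≤ Rr A :=
  le_ciSup (f := fun i => ∑ j, ‖A i j‖) (Set.Finite.bddAbove (Set.finite_range _)) i

lemma colsum_le_Cc (j : Fin n) : ∑ i, ‖A i j‖ ≤ Cc A :=
  le_ciSup (f := fun j => ∑ i, ‖A i j‖) (Set.Finite.bddAbove (Set.finite_range _)) j

lemma mulVec_apply (x : Fin n → ℂ) (i : Fin m) :
    A.mulVec x i = ∑ j, A i j * x j := rfl

lemma norm_mulVec_apply_le (x : Fin n → ℂ) (i : Fin m) :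
    ‖A.mulVec x i‖ ≤ ∑ j, ‖A i j‖ * ‖x j‖ := by
  rw [mulVec_apply]
  refine le_trans (norm_sum_le _ _) ?_
  exact Finset.sum_le_sum fun j _ => le_of_eq (norm_mul _ _)

lemma en_mulVec_le_E_vnInf (x : Fin n → ℂ) :
    en (A.mulVec x) ≤ Etot A * vnInf x := by
  refine le_trans (en_le_sum _) ?_
  rw [Etot, Finset.sum_mul]
  refine Finset.sum_le_sum fun i _ => ?_
  refine le_trans (norm_mulVec_apply_le A x i) ?_
  rw [Finset.sum_mul]
  exact Finset.sum_le_sum fun j _ =>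
    mul_le_mul_of_nonneg_left (le_vnInf x j) (norm_nonneg _)

lemma vnInf_le_en (x : Fin n → ℂ) : vnInf x ≤ en x :=
  vnInf_le x (en x) (en_nonneg x) (fun i => coord_le_en x i)

lemma Etot_mem : Etot A ∈ {C | 0 ≤ C ∧ ∀ x : Fin n → ℂ, en (A.mulVec x) ≤ C * en x} := by
  refine ⟨Etot_nonneg A, fun x => ?_⟩
  refine le_trans (en_mulVec_le_E_vnInf A x) ?_
  exact mul_le_mul_of_nonneg_left (vnInf_le_en x) (Etot_nonneg A)

lemma opNorm2_nonneg : 0 ≤ opNorm2 A :=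
  Real.sInf_nonneg fun _ hC => hC.1

lemma opNorm2_le {C : ℝ} (hC : 0 ≤ C) (h : ∀ x : Fin n → ℂ, en (A.mulVec x) ≤ C * en x) :
    opNorm2 A ≤ C :=
  csInf_le ⟨0, fun _ hb => hb.1⟩ ⟨hC, h⟩

lemma opNorm2_apply (x : Fin n → ℂ) : en (A.mulVec x) ≤ opNorm2 A * en x := by
  rcases eq_or_ne (en x) 0 with h | h
  · have hx : x = 0 := (en_eq_zero_iff x).mp h
    rw [hx, Matrix.mulVec_zero, en_zero]
    exact mul_nonneg (opNorm2_nonneg A) (en_nonneg 0)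
  · have hx : 0 < en x := lt_of_le_of_ne (en_nonneg x) (Ne.symm h)
    have key : en (A.mulVec x) / en x ≤ opNorm2 A := by
      refine le_csInf ⟨Etot A, Etot_mem A⟩ fun C hC => ?_
      rw [div_le_iff₀ hx]
      exact hC.2 x
    calc en (A.mulVec x) = en (A.mulVec x) / en x * en x := by field_simp
      _ ≤ opNorm2 A * en x := mul_le_mul_of_nonneg_right key (le_of_lt hx)

lemma opNorm1_nonneg : 0 ≤ opNorm1 A :=
  Real.sInf_nonneg fun _ hC => hC.1

lemma opNormInf_nonneg : 0 ≤ opNormInf A :=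
  Real.sInf_nonneg fun _ hC => hC.1

lemma vn1_mulVec_le (x : Fin n → ℂ) : vn1 (A.mulVec x) ≤ Cc A * vn1 x := by
  rw [vn1]
  have h1 : ∑ i, ‖A.mulVec x i‖ ≤ ∑ i, ∑ j, ‖A i j‖ * ‖x j‖ :=
    Finset.sum_le_sum fun i _ => norm_mulVec_apply_le A x i
  refine le_trans h1 ?_
  rw [Finset.sum_comm, vn1, Finset.mul_sum]
  refine Finset.sum_le_sum fun j _ => ?_
  have : ∑ i, ‖A i j‖ * ‖x j‖ = (∑ i, ‖A i j‖) * ‖x j‖ := by rw [Finset.sum_mul]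
  rw [this]
  exact mul_le_mul_of_nonneg_right (colsum_le_Cc A j) (norm_nonneg _)

lemma vnInf_mulVec_le (x : Fin n → ℂ) : vnInf (A.mulVec x) ≤ Rr A * vnInf x := by
  refine vnInf_le _ _ (mul_nonneg (Rr_nonneg A) (vnInf_nonneg x)) fun i => ?_
  refine le_trans (norm_mulVec_apply_le A x i) ?_
  have h1 : ∑ j, ‖A i j‖ * ‖x j‖ ≤ ∑ j, ‖A i j‖ * vnInf x :=
    Finset.sum_le_sum fun j _ => mul_le_mul_of_nonneg_left (le_vnInf x j) (norm_nonneg _)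
  refine le_trans h1 ?_
  rw [← Finset.sum_mul]
  exact mul_le_mul_of_nonneg_right (rowsum_le_Rr A i) (vnInf_nonneg x)

lemma opNorm1_apply (x : Fin n → ℂ) : vn1 (A.mulVec x) ≤ opNorm1 A * vn1 x := by
  rcases eq_or_ne (vn1 x) 0 with h | h
  · have hx : x = 0 := vn1_eq_zero x h
    rw [hx, Matrix.mulVec_zero]
    have h0 : vn1 (0 : Fin m → ℂ) = 0 := by simp [vn1]
    rw [h0]
    exact mul_nonneg (opNorm1_nonneg A) (vn1_nonneg 0)
  · have hx : 0 < vn1 x := lt_of_le_of_ne (vn1_nonneg x) (Ne.symm h)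
    have key : vn1 (A.mulVec x) / vn1 x ≤ opNorm1 A := by
      refine le_csInf ⟨Cc A, Cc_nonneg A, fun y => vn1_mulVec_le A y⟩ fun C hC => ?_
      rw [div_le_iff₀ hx]
      exact hC.2 x
    calc vn1 (A.mulVec x) = vn1 (A.mulVec x) / vn1 x * vn1 x := by field_simp
      _ ≤ opNorm1 A * vn1 x := mul_le_mul_of_nonneg_right key (le_of_lt hx)

lemma opNormInf_apply (x : Fin n → ℂ) : vnInf (A.mulVec x) ≤ opNormInf A * vnInf x := by
  rcases eq_or_ne (vnInf x) 0 with h | h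
  · have hx : x = 0 := vnInf_eq_zero x h
    rw [hx, Matrix.mulVec_zero]
    have h0 : vnInf (0 : Fin m → ℂ) ≤ 0 := vnInf_le _ 0 le_rfl (fun i => by simp)
    exact le_trans h0 (mul_nonneg (opNormInf_nonneg A) (vnInf_nonneg 0))
  · have hx : 0 < vnInf x := lt_of_le_of_ne (vnInf_nonneg x) (Ne.symm h)
    have key : vnInf (A.mulVec x) / vnInf x ≤ opNormInf A := by
      refine le_csInf ⟨Rr A, Rr_nonneg A, fun y => vnInf_mulVec_le A y⟩ fun C hC => ?_
      rw [div_le_iff₀ hx]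
      exact hC.2 x
    calc vnInf (A.mulVec x) = vnInf (A.mulVec x) / vnInf x * vnInf x := by field_simp
      _ ≤ opNormInf A * vnInf x := mul_le_mul_of_nonneg_right key (le_of_lt hx)

end MatrixLemmas

end Stmt8Aux

namespace Stmt8Aux

section MatrixLemmas2

variable {m n : ℕ} (A : Matrix (Fin m) (Fin n) ℂ)

lemma Rr_le_opNormInf (hn : 0 < n) : Rr A ≤ opNormInf A := by
  rcases Nat.eq_zero_or_pos m with hm | hm
  · subst hm
    have : Rr A ≤ 0 := by
      rw [Rr, Real.iSup_of_isEmpty]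
    exact le_trans this (opNormInf_nonneg A)
  haveI : Nonempty (Fin m) := ⟨⟨0, hm⟩⟩
  haveI : Nonempty (Fin n) := ⟨⟨0, hn⟩⟩
  refine ciSup_le fun i => ?_
  -- phase vector
  set x : Fin n → ℂ := fun j => if A i j = 0 then 1 else (starRingEnd ℂ) (A i j) / ‖A i j‖
    with hxdef
  have hx1 : ∀ j, ‖x j‖ = 1 := by
    intro j
    rw [hxdef]
    by_cases h : A i j = 0
    · simp [h]
    · simp only [h, if_false]
      rw [norm_div]
      rw [RingHomIsometric.norm_map]
      simp [norm_eq_zero.not.mpr h, h]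
  have hvx : vnInf x = 1 := by
    refine le_antisymm (vnInf_le x 1 zero_le_one fun j => le_of_eq (hx1 j)) ?_
    have := le_vnInf x (Classical.arbitrary (Fin n))
    rw [hx1] at this
    exact this
  have hAx : A.mulVec x i = ((∑ j, ‖A i j‖ : ℝ) : ℂ) := by
    rw [mulVec_apply]
    push_cast
    refine Finset.sum_congr rfl fun j _ => ?_
    rw [hxdef]
    by_cases h : A i j = 0
    · simp [h]
    · simp only [h, if_false]
      rw [mul_div_assoc']
      rw [Complex.mul_conj]
      rw [Complex.normSq_eq_norm_sq]
      rw [div_eq_iff]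
      · push_cast
        ring
      · simp [h]
  have h1 : ∑ j, ‖A i j‖ = ‖A.mulVec x i‖ := by
    rw [hAx, Complex.norm_real]
    exact (Real.norm_of_nonneg (Finset.sum_nonneg fun j _ => norm_nonneg _)).symm
  rw [h1]
  calc ‖A.mulVec x i‖ ≤ vnInf (A.mulVec x) := le_vnInf _ i
    _ ≤ opNormInf A * vnInf x := opNormInf_apply A x
    _ = opNormInf A := by rw [hvx, mul_one]

lemma Cc_le_opNorm1 (hm : 0 < m) : Cc A ≤ opNorm1 A := by
  rcases Nat.eq_zero_or_pos n with hn | hn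
  · subst hn
    have : Cc A ≤ 0 := by rw [Cc, Real.iSup_of_isEmpty]
    exact le_trans this (opNorm1_nonneg A)
  haveI : Nonempty (Fin n) := ⟨⟨0, hn⟩⟩
  refine ciSup_le fun j => ?_
  set x : Fin n → ℂ := fun k => if k = j then 1 else 0 with hxdef
  have hvx : vn1 x = 1 := by
    rw [vn1, hxdef]
    rw [Finset.sum_eq_single j]
    · simp
    · intro k _ hk; simp [hk]
    · intro h; exact absurd (Finset.mem_univ j) h
  have hAx : ∀ i, A.mulVec x i = A i j := by
    intro i
    rw [mulVec_apply, hxdef]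
    rw [Finset.sum_eq_single j]
    · simp
    · intro k _ hk; simp [hk]
    · intro h; exact absurd (Finset.mem_univ j) h
  have h1 : vn1 (A.mulVec x) = ∑ i, ‖A i j‖ := by
    rw [vn1]
    exact Finset.sum_congr rfl fun i _ => by rw [hAx]
  calc ∑ i, ‖A i j‖ = vn1 (A.mulVec x) := h1.symm
    _ ≤ opNorm1 A * vn1 x := opNorm1_apply A x
    _ = opNorm1 A := by rw [hvx, mul_one]

/-- Schur test -/
lemma en_mulVec_le_sqrt_RC (x : Fin n → ℂ) :
    en (A.mulVec x) ≤ Real.sqrt (Rr A * Cc A) * en x := by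
  have key : en (A.mulVec x) ^ 2 ≤ Rr A * Cc A * en x ^ 2 := by
    rw [sq_en, sq_en]
    have step1 : ∀ i, ‖A.mulVec x i‖ ^ 2 ≤
        (∑ j, ‖A i j‖) * (∑ j, ‖A i j‖ * ‖x j‖ ^ 2) := by
      intro i
      have h0 : ‖A.mulVec x i‖ ^ 2 ≤ (∑ j, ‖A i j‖ * ‖x j‖) ^ 2 := by
        have := norm_mulVec_apply_le A x i
        have hnn : 0 ≤ ‖A.mulVec x i‖ := norm_nonneg _
        nlinarith
      refine le_trans h0 ?_
      refine Finset.sum_sq_le_sum_mul_sum_of_sq_eq_mul Finset.univ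
        (fun j _ => norm_nonneg _) (fun j _ => by positivity) (fun j _ => by ring)
    calc ∑ i, ‖A.mulVec x i‖ ^ 2
        ≤ ∑ i, (∑ j, ‖A i j‖) * (∑ j, ‖A i j‖ * ‖x j‖ ^ 2) :=
          Finset.sum_le_sum fun i _ => step1 i
      _ ≤ ∑ i, Rr A * (∑ j, ‖A i j‖ * ‖x j‖ ^ 2) := by
          refine Finset.sum_le_sum fun i _ => ?_
          exact mul_le_mul_of_nonneg_right (rowsum_le_Rr A i)
            (Finset.sum_nonneg fun j _ => by positivity)
      _ = Rr A * ∑ j, (∑ i, ‖A i j‖) * ‖x j‖ ^ 2 := by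
          rw [← Finset.mul_sum, Finset.sum_comm]
          congr 1
          exact Finset.sum_congr rfl fun j _ => by rw [Finset.sum_mul]
      _ ≤ Rr A * ∑ j, Cc A * ‖x j‖ ^ 2 := by
          refine mul_le_mul_of_nonneg_left ?_ (Rr_nonneg A)
          exact Finset.sum_le_sum fun j _ =>
            mul_le_mul_of_nonneg_right (colsum_le_Cc A j) (by positivity)
      _ = Rr A * Cc A * ∑ j, ‖x j‖ ^ 2 := by rw [← Finset.mul_sum]; ring
  have h2 : en (A.mulVec x) = Real.sqrt (en (A.mulVec x) ^ 2) :=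
    (Real.sqrt_sq (en_nonneg _)).symm
  rw [h2]
  refine le_trans (Real.sqrt_le_sqrt key) ?_
  rw [Real.sqrt_mul (mul_nonneg (Rr_nonneg A) (Cc_nonneg A))]
  rw [Real.sqrt_sq (en_nonneg x)]

end MatrixLemmas2

end Stmt8Aux
namespace Stmt8Aux

section DnormLemmas

variable {m n : ℕ} (A : Matrix (Fin m) (Fin n) ℂ)

lemma one_le_en_binary (ξ : Fin n → ℂ) (hb : ∀ j, ξ j = 0 ∨ ξ j = 1) (hne : ξ ≠ 0) :
    1 ≤ en ξ := by
  have : ∃ j, ξ j ≠ 0 := by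
    by_contra h
    push_neg at h
    exact hne (funext h)
  obtain ⟨j, hj⟩ := this
  have h1 : ξ j = 1 := (hb j).resolve_left hj
  have := coord_le_en ξ j
  rw [h1] at this
  simpa using this

lemma dnorm_bddAbove : BddAbove {r | ∃ ξ : Fin n → ℂ, (∀ i, ξ i = 0 ∨ ξ i = 1) ∧ ξ ≠ 0 ∧
    r = en (A.mulVec ξ) / en ξ} := by
  refine ⟨Etot A, fun r hr => ?_⟩
  obtain ⟨ξ, hb, hne, rfl⟩ := hr
  have h1 : 1 ≤ en ξ := one_le_en_binary ξ hb hne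
  have h2 : vnInf ξ ≤ 1 := by
    refine vnInf_le ξ 1 zero_le_one fun j => ?_
    rcases hb j with h | h <;> simp [h]
  have h3 : en (A.mulVec ξ) ≤ Etot A := by
    refine le_trans (en_mulVec_le_E_vnInf A ξ) ?_
    calc Etot A * vnInf ξ ≤ Etot A * 1 := mul_le_mul_of_nonneg_left h2 (Etot_nonneg A)
      _ = Etot A := mul_one _
  calc en (A.mulVec ξ) / en ξ ≤ en (A.mulVec ξ) / 1 := by
        refine div_le_div_of_nonneg_left (en_nonneg _) ?_ h1
        · norm_num
      _ = en (A.mulVec ξ) := div_one _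
      _ ≤ Etot A := h3

lemma en_mulVec_binary_le (ξ : Fin n → ℂ) (hb : ∀ j, ξ j = 0 ∨ ξ j = 1) :
    en (A.mulVec ξ) ≤ dnorm A * en ξ := by
  rcases eq_or_ne ξ 0 with h | hne
  · rw [h, Matrix.mulVec_zero, en_zero]
    -- need 0 ≤ dnorm A * en 0 : en 0 = 0
    rw [en_zero, mul_zero]
  · have h1 : 0 < en ξ := lt_of_lt_of_le zero_lt_one (one_le_en_binary ξ hb hne)
    have hmem : en (A.mulVec ξ) / en ξ ∈ {r | ∃ ξ : Fin n → ℂ,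
        (∀ i, ξ i = 0 ∨ ξ i = 1) ∧ ξ ≠ 0 ∧ r = en (A.mulVec ξ) / en ξ} :=
      ⟨ξ, hb, hne, rfl⟩
    have h2 : en (A.mulVec ξ) / en ξ ≤ dnorm A := le_csSup (dnorm_bddAbove A) hmem
    calc en (A.mulVec ξ) = en (A.mulVec ξ) / en ξ * en ξ := by field_simp
      _ ≤ dnorm A * en ξ := mul_le_mul_of_nonneg_right h2 (le_of_lt h1)

lemma dnorm_nonneg (hn : 0 < n) : 0 ≤ dnorm A := by
  set ξ : Fin n → ℂ := fun j => if j = ⟨0, hn⟩ then 1 else 0 with hξ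
  have hb : ∀ j, ξ j = 0 ∨ ξ j = 1 := by
    intro j
    rw [hξ]
    by_cases h : j = ⟨0, hn⟩ <;> simp [h]
  have hne : ξ ≠ 0 := by
    intro h
    have := congrFun h ⟨0, hn⟩
    rw [hξ] at this
    simp at this
  have hmem : en (A.mulVec ξ) / en ξ ∈ {r | ∃ ξ : Fin n → ℂ,
      (∀ i, ξ i = 0 ∨ ξ i = 1) ∧ ξ ≠ 0 ∧ r = en (A.mulVec ξ) / en ξ} := ⟨ξ, hb, hne, rfl⟩
  have h2 := le_csSup (dnorm_bddAbove A) hmem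
  have h3 : 0 ≤ en (A.mulVec ξ) / en ξ := div_nonneg (en_nonneg _) (en_nonneg _)
  exact le_trans h3 h2

lemma dnorm_le_opNorm2 (hn : 0 < n) : dnorm A ≤ opNorm2 A := by
  have hne : {r | ∃ ξ : Fin n → ℂ, (∀ i, ξ i = 0 ∨ ξ i = 1) ∧ ξ ≠ 0 ∧
      r = en (A.mulVec ξ) / en ξ}.Nonempty := by
    set ξ : Fin n → ℂ := fun j => if j = ⟨0, hn⟩ then 1 else 0 with hξ
    refine ⟨en (A.mulVec ξ) / en ξ, ξ, ?_, ?_, rfl⟩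
    · intro j; by_cases h : j = ⟨0, hn⟩ <;> simp [hξ, h]
    · intro h
      have := congrFun h ⟨0, hn⟩
      rw [hξ] at this
      simp at this
  refine csSup_le hne fun r hr => ?_
  obtain ⟨ξ, hb, hne2, rfl⟩ := hr
  have h1 : 0 < en ξ := lt_of_lt_of_le zero_lt_one (one_le_en_binary ξ hb hne2)
  rw [div_le_iff₀ h1]
  exact opNorm2_apply A ξ

/-- Binary expansion bound with error term. -/
lemma expand_aux (hD : 0 ≤ dnorm A) :
    ∀ (s : ℕ) (c : ℝ) (v : Fin n → ℝ), 0 < c → (∀ j, 0 ≤ v j) → (∀ j, v j ≤ c) →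
    en (A.mulVec (fun j => (v j : ℂ))) ≤
      dnorm A * Real.sqrt (c * ∑ j, v j) + (1/2)^s * (c * Etot A) := by
  intro s
  induction s with
  | zero =>
    intro c v hc h0 h1
    have key : en (A.mulVec (fun j => (v j : ℂ))) ≤ c * Etot A := by
      refine le_trans (en_le_sum _) ?_
      have step : ∀ i, ‖A.mulVec (fun j => (v j : ℂ)) i‖ ≤ ∑ j, ‖A i j‖ * c := by
        intro i
        refine le_trans (norm_mulVec_apply_le A _ i) ?_
        refine Finset.sum_le_sum fun j _ => ?_
        refine mul_le_mul_of_nonneg_left ?_ (norm_nonneg _)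
        rw [Complex.norm_real, Real.norm_of_nonneg (h0 j)]
        exact h1 j
      refine le_trans (Finset.sum_le_sum fun i _ => step i) ?_
      rw [Etot, Finset.mul_sum]
      refine le_of_eq (Finset.sum_congr rfl fun i _ => ?_)
      rw [← Finset.sum_mul, mul_comm]
    have h2 : 0 ≤ dnorm A * Real.sqrt (c * ∑ j, v j) :=
      mul_nonneg hD (Real.sqrt_nonneg _)
    calc en (A.mulVec (fun j => (v j : ℂ))) ≤ c * Etot A := key
      _ ≤ dnorm A * Real.sqrt (c * ∑ j, v j) + (1/2)^0 * (c * Etot A) := by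
          rw [pow_zero, one_mul]; linarith
  | succ s IH =>
    intro c v hc h0 h1
    set ξr : Fin n → ℝ := fun j => if c/2 ≤ v j then 1 else 0 with hξr
    set ξ : Fin n → ℂ := fun j => ((ξr j : ℝ) : ℂ) with hξ
    set v' : Fin n → ℝ := fun j => v j - c/2 * ξr j with hv'
    have hb : ∀ j, ξ j = 0 ∨ ξ j = 1 := by
      intro j
      rw [hξ, hξr]
      by_cases h : c/2 ≤ v j <;> simp [h]
    have hv'0 : ∀ j, 0 ≤ v' j := by
      intro j
      rw [hv', hξr]
      by_cases h : c/2 ≤ v j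
      · simp only [h, if_true]; linarith
      · simp only [h, if_false]; simpa using h0 j
    have hv'1 : ∀ j, v' j ≤ c/2 := by
      intro j
      rw [hv', hξr]
      by_cases h : c/2 ≤ v j
      · simp only [h, if_true]; have := h1 j; linarith
      · simp only [h, if_false]
        have := le_of_not_ge h
        simpa using by linarith
    have hsplit : (fun j => (v j : ℂ)) = (fun j => (v' j : ℂ)) + ((c/2 : ℝ) : ℂ) • ξ := by
      funext j
      simp only [Pi.add_apply, Pi.smul_apply, hv', hξ, smul_eq_mul]
      push_cast
      ring
    have htri : en (A.mulVec (fun j => (v j : ℂ))) ≤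
        en (A.mulVec (fun j => (v' j : ℂ))) + (c/2) * en (A.mulVec ξ) := by
      rw [hsplit, Matrix.mulVec_add, Matrix.mulVec_smul]
      refine le_trans (en_add_le _ _) ?_
      rw [en_smul]
      rw [Complex.norm_real, Real.norm_of_nonneg (by linarith : (0:ℝ) ≤ c/2)]
    have henξ : en ξ = Real.sqrt (∑ j, ξr j) := by
      rw [en]
      congr 1
      refine Finset.sum_congr rfl fun j _ => ?_
      rw [hξ, hξr]
      by_cases h : c/2 ≤ v j <;> simp [h]
    have hKnn : 0 ≤ ∑ j, ξr j := by
      refine Finset.sum_nonneg fun j _ => ?_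
      rw [hξr]
      by_cases h : c/2 ≤ v j <;> simp [h]
    have hbound : en (A.mulVec ξ) ≤ dnorm A * Real.sqrt (∑ j, ξr j) := by
      rw [← henξ]
      exact en_mulVec_binary_le A ξ hb
    have hIH := IH (c/2) v' (by linarith) hv'0 hv'1
    have hsum : ∑ j, v j = (∑ j, v' j) + (c/2) * ∑ j, ξr j := by
      rw [Finset.mul_sum, ← Finset.sum_add_distrib]
      refine Finset.sum_congr rfl fun j _ => ?_
      rw [hv']
      ring
    have hb' : 0 ≤ ∑ j, v' j := Finset.sum_nonneg fun j _ => hv'0 j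
    -- algebra: (c/2) * √K ≤ √((c/2) * ((c/2)*K))
    have halg : (c/2) * Real.sqrt (∑ j, ξr j) + Real.sqrt ((c/2) * ∑ j, v' j) ≤
        Real.sqrt (c * ∑ j, v j) := by
      have e1 : (c/2) * Real.sqrt (∑ j, ξr j) = Real.sqrt ((c/2) * ((c/2) * ∑ j, ξr j)) := by
        rw [← mul_assoc, Real.sqrt_mul (by positivity)]
        rw [Real.sqrt_mul_self (by linarith : (0:ℝ) ≤ c/2)]
      rw [e1]
      refine le_trans (sqrt_add_sqrt_le _ _ (by positivity) (by positivity)) ?_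
      refine Real.sqrt_le_sqrt (le_of_eq ?_)
      rw [hsum]
      ring
    calc en (A.mulVec (fun j => (v j : ℂ)))
        ≤ en (A.mulVec (fun j => (v' j : ℂ))) + (c/2) * en (A.mulVec ξ) := htri
      _ ≤ (dnorm A * Real.sqrt ((c/2) * ∑ j, v' j) + (1/2)^s * ((c/2) * Etot A)) +
          (c/2) * (dnorm A * Real.sqrt (∑ j, ξr j)) := by
          refine add_le_add hIH ?_
          exact mul_le_mul_of_nonneg_left hbound (by linarith)
      _ ≤ dnorm A * Real.sqrt (c * ∑ j, v j) + (1/2)^(s+1) * (c * Etot A) := by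
          have e2 : (1/2:ℝ)^s * ((c/2) * Etot A) = (1/2)^(s+1) * (c * Etot A) := by
            rw [pow_succ]; ring
          rw [← e2]
          have e3 : dnorm A * Real.sqrt ((c/2) * ∑ j, v' j) +
              (c/2) * (dnorm A * Real.sqrt (∑ j, ξr j)) ≤
              dnorm A * Real.sqrt (c * ∑ j, v j) := by
            have := mul_le_mul_of_nonneg_left halg hD
            calc dnorm A * Real.sqrt ((c/2) * ∑ j, v' j) +
                (c/2) * (dnorm A * Real.sqrt (∑ j, ξr j))
                = dnorm A * ((c/2) * Real.sqrt (∑ j, ξr j) +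
                    Real.sqrt ((c/2) * ∑ j, v' j)) := by ring
              _ ≤ dnorm A * Real.sqrt (c * ∑ j, v j) := this
          linarith
  
/-- Key lemma: for a nonneg vector with entries ≤ c, ‖Av‖ ≤ D √(c ‖v‖₁). -/
lemma en_mulVec_nonneg_le (hD : 0 ≤ dnorm A) (c : ℝ) (v : Fin n → ℝ)
    (hc : 0 < c) (h0 : ∀ j, 0 ≤ v j) (h1 : ∀ j, v j ≤ c) :
    en (A.mulVec (fun j => (v j : ℂ))) ≤ dnorm A * Real.sqrt (c * ∑ j, v j) := by
  refine le_of_forall_pos_le_add fun ε hε => ?_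
  have hEc : 0 ≤ c * Etot A := mul_nonneg (le_of_lt hc) (Etot_nonneg A)
  obtain ⟨s, hs⟩ := exists_pow_lt_of_lt_one
    (div_pos hε (by linarith : (0:ℝ) < c * Etot A + 1)) (by norm_num : (1/2:ℝ) < 1)
  have h2 : (1/2:ℝ)^s * (c * Etot A) < ε := by
    have hpos : (0:ℝ) < c * Etot A + 1 := by linarith
    have h3 : (1/2:ℝ)^s * (c * Etot A + 1) < ε := (lt_div_iff₀ hpos).mp hs
    nlinarith [pow_pos (by norm_num : (0:ℝ) < 1/2) s]
  have := expand_aux A hD s c v hc h0 h1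
  linarith

end DnormLemmas

end Stmt8Aux
namespace Stmt8Aux

lemma geom_half_eq (N : ℕ) : ∑ i ∈ Finset.range N, ((1:ℝ)/2)^i = 2 - 2*(1/2)^N := by
  induction N with
  | zero => simp
  | succ N IH =>
    rw [Finset.sum_range_succ, IH, pow_succ]
    ring

lemma geom_tail_le (T k W : ℕ) :
    ∑ l ∈ Finset.range T, (if k + W ≤ l then ((1:ℝ)/2)^(l-k) else 0) ≤ 2*(1/2)^W := by
  have hfe : (Finset.range T).filter (fun l => k + W ≤ l) = Finset.Ico (k+W) T := by
    ext l
    simp only [Finset.mem_filter, Finset.mem_range, Finset.mem_Ico]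
    omega
  rw [← Finset.sum_filter, hfe, Finset.sum_Ico_eq_sum_range]
  have he : ∀ i, ((1:ℝ)/2)^(k + W + i - k) = (1/2)^W * (1/2)^i := by
    intro i
    rw [show k + W + i - k = W + i by omega, pow_add]
  rw [Finset.sum_congr rfl fun i _ => he i, ← Finset.mul_sum]
  have h2 : ∑ i ∈ Finset.range (T - (k+W)), ((1:ℝ)/2)^i ≤ 2 := by
    rw [geom_half_eq]
    have : (0:ℝ) < (1/2)^(T - (k+W)) := by positivity
    linarith
  calc ((1:ℝ)/2)^W * ∑ i ∈ Finset.range (T - (k+W)), ((1:ℝ)/2)^i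
      ≤ (1/2)^W * 2 := by
        refine mul_le_mul_of_nonneg_left h2 (by positivity)
    _ = 2*(1/2)^W := by ring

section Quadratic

variable {m n : ℕ} (A : Matrix (Fin m) (Fin n) ℂ)

lemma mulVec_sum {α : Type*} (s : Finset α) (f : α → (Fin n → ℂ)) :
    A.mulVec (∑ k ∈ s, f k) = ∑ k ∈ s, A.mulVec (f k) := by
  classical
  induction s using Finset.induction_on with
  | empty => simp [Matrix.mulVec_zero]
  | insert _ _ h ih =>
    rw [Finset.sum_insert h, Finset.sum_insert h, Matrix.mulVec_add, ih]

/-- The core quadratic estimate for nonnegative vectors. -/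
lemma nonneg_quadratic (hD : 0 ≤ dnorm A) (W : ℕ) (hW : 1 ≤ W)
    (u : Fin n → ℝ) (h0 : ∀ j, 0 ≤ u j) :
    en (A.mulVec (fun j => (u j : ℂ))) ^ 2 ≤
      (2 * (2*(W:ℝ) - 1) * dnorm A ^ 2 + 8 * (Rr A * Cc A) * (1/2)^W) * ∑ j, u j ^ 2 := by
  classical
  have hcoefnn : 0 ≤ 2 * (2*(W:ℝ) - 1) * dnorm A ^ 2 + 8 * (Rr A * Cc A) * (1/2)^W := by
    have h1 : (1:ℝ) ≤ (W:ℝ) := by exact_mod_cast hW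
    have h2 : 0 ≤ Rr A * Cc A := mul_nonneg (Rr_nonneg A) (Cc_nonneg A)
    have h3 : 0 ≤ ((1:ℝ)/2)^W := by positivity
    nlinarith [sq_nonneg (dnorm A)]
  by_cases hu : u = 0
  · subst hu
    have hz : (fun j => ((0 : Fin n → ℝ) j : ℂ)) = (0 : Fin n → ℂ) := by
      funext j; simp
    rw [hz, Matrix.mulVec_zero, en_zero]
    have : (0:ℝ)^2 = 0 := by norm_num
    rw [this]
    exact mul_nonneg hcoefnn (Finset.sum_nonneg fun j _ => sq_nonneg _)
  -- setup
  have hex : ∃ j, 0 < u j := by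
    by_contra h
    push_neg at h
    exact hu (funext fun j => le_antisymm (h j) (h0 j))
  obtain ⟨j₀, hj₀⟩ := hex
  haveI : Nonempty (Fin n) := ⟨j₀⟩
  set M : ℝ := Finset.univ.sup' Finset.univ_nonempty u with hMdef
  have hujM : ∀ j, u j ≤ M := fun j => Finset.le_sup' u (Finset.mem_univ j)
  have hM : 0 < M := lt_of_lt_of_le hj₀ (hujM j₀)
  set lv : Fin n → ℕ := fun j => ⌊Real.logb 2 (M / u j)⌋₊ with hlvdef
  set ck : ℕ → ℝ := fun k => (1/2)^k * M with hckdef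
  have hckpos : ∀ k, 0 < ck k := fun k => by
    rw [hckdef]; positivity
  have hckhalf : ∀ k, ck (k+1) = ck k / 2 := by
    intro k; rw [hckdef]; simp only [pow_succ]; ring
  -- upper and lower level bounds
  have hup : ∀ j, 0 < u j → u j ≤ ck (lv j) := by
    intro j hj
    have hr : 1 ≤ M / u j := (one_le_div hj).mpr (hujM j)
    have hlb : 0 ≤ Real.logb 2 (M / u j) := Real.logb_nonneg (by norm_num) hr
    have h1 : ((lv j : ℕ) : ℝ) ≤ Real.logb 2 (M / u j) := by
      rw [hlvdef]; exact Nat.floor_le hlb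
    have h2 : (2:ℝ) ^ ((lv j : ℕ) : ℝ) ≤ (2:ℝ) ^ Real.logb 2 (M / u j) :=
      (Real.rpow_le_rpow_left_iff (by norm_num)).mpr h1
    rw [Real.rpow_logb (by norm_num) (by norm_num) (by positivity), Real.rpow_natCast] at h2
    show u j ≤ (1/2)^(lv j) * M
    have h3 : (2:ℝ)^(lv j) * u j ≤ M := (le_div_iff₀ hj).mp h2
    have hp : (0:ℝ) < (2:ℝ)^(lv j) := by positivity
    rw [div_pow, one_pow, div_mul_eq_mul_div, one_mul, le_div_iff₀ hp]
    linarith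
  have hlow : ∀ j, 0 < u j → ck (lv j + 1) < u j := by
    intro j hj
    have h1 : Real.logb 2 (M / u j) < (lv j : ℝ) + 1 := by
      have h := Nat.lt_floor_add_one (Real.logb 2 (M / u j))
      have : ((⌊Real.logb 2 (M / u j)⌋₊ : ℕ) : ℝ) = ((lv j : ℕ) : ℝ) := by
        simp only [hlvdef]
      rw [← this]
      exact_mod_cast h
    have h2 : (2:ℝ) ^ Real.logb 2 (M / u j) < (2:ℝ) ^ (((lv j : ℝ)) + 1) :=
      (Real.rpow_lt_rpow_left_iff (by norm_num)).mpr h1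
    rw [Real.rpow_logb (by norm_num) (by norm_num) (by positivity)] at h2
    have h3 : ((lv j : ℝ) + 1) = ((lv j + 1 : ℕ) : ℝ) := by push_cast; ring
    rw [h3, Real.rpow_natCast] at h2
    rw [div_lt_iff₀ hj] at h2
    show (1/2)^(lv j + 1) * M < u j
    have hp : (0:ℝ) < (2:ℝ)^(lv j + 1) := by positivity
    rw [div_pow, one_pow, div_mul_eq_mul_div, one_mul, div_lt_iff₀ hp]
    linarith
  -- the level decomposition
  set T : ℕ := (Finset.univ.sup lv) + 1 with hTdef
  have hlvT : ∀ j, lv j < T := fun j =>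
    Nat.lt_succ_of_le (Finset.le_sup (Finset.mem_univ j))
  set uk : ℕ → Fin n → ℝ := fun k j => if 0 < u j ∧ lv j = k then u j else 0 with hukdef
  have huk0 : ∀ k j, 0 ≤ uk k j := by
    intro k j
    simp only [hukdef]
    split
    · exact h0 j
    · exact le_rfl
  have huksum : ∀ j, ∑ k ∈ Finset.range T, uk k j = u j := by
    intro j
    by_cases hj : 0 < u j
    · rw [Finset.sum_eq_single_of_mem (lv j) (Finset.mem_range.mpr (hlvT j))]
      · simp only [hukdef]
        simp [hj]
      · intro k _ hk
        simp only [hukdef]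
        rw [if_neg (fun hc => hk hc.2.symm)]
    · have hj0 : u j = 0 := le_antisymm (not_lt.mp hj) (h0 j)
      rw [hj0]
      refine Finset.sum_eq_zero fun k _ => ?_
      simp only [hukdef]
      rw [if_neg (fun hc => hj hc.1)]
  have hsum_vec : (fun j => (u j : ℂ)) = ∑ k ∈ Finset.range T, (fun j => (uk k j : ℂ)) := by
    funext j
    rw [Finset.sum_apply]
    rw [← Complex.ofReal_sum]
    rw [huksum]
  set βsq : ℕ → ℝ := fun k => ∑ j, (uk k j)^2 with hβdef
  have hβnn : ∀ k, 0 ≤ βsq k := fun k => Finset.sum_nonneg fun j _ => sq_nonneg _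
  have hβtotal : ∑ k ∈ Finset.range T, βsq k = ∑ j, u j ^ 2 := by
    simp only [hβdef]
    rw [Finset.sum_comm]
    refine Finset.sum_congr rfl fun j _ => ?_
    by_cases hj : 0 < u j
    · rw [Finset.sum_eq_single_of_mem (lv j) (Finset.mem_range.mpr (hlvT j))]
      · simp only [hukdef]
        simp [hj]
      · intro k _ hk
        simp only [hukdef]
        rw [if_neg (fun hc => hk hc.2.symm)]
        norm_num
    · have hj0 : u j = 0 := le_antisymm (not_lt.mp hj) (h0 j)
      rw [hj0]
      refine Eq.trans (Finset.sum_eq_zero fun k _ => ?_) (by norm_num)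
      simp only [hukdef]
      rw [if_neg (fun hc => hj hc.1)]
      norm_num
  have hukle : ∀ k j, uk k j ≤ ck k := by
    intro k j
    simp only [hukdef]
    split
    case isTrue h => rw [← h.2]; exact hup j h.1
    case isFalse => exact le_of_lt (hckpos k)
  have huklow : ∀ k j, uk k j ≠ 0 → ck k / 2 < uk k j := by
    intro k j hne
    simp only [hukdef] at hne ⊢
    by_cases h : 0 < u j ∧ lv j = k
    · rw [if_pos h]
      rw [← hckhalf k, ← h.2]
      exact hlow j h.1
    · rw [if_neg h] at hne; exact absurd rfl hne
  have hl1 : ∀ k, ck k * ∑ j, uk k j ≤ 2 * βsq k := by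
    intro k
    simp only [hβdef]
    rw [Finset.mul_sum, Finset.mul_sum]
    refine Finset.sum_le_sum fun j _ => ?_
    by_cases h : uk k j = 0
    · rw [h]; norm_num
    · have h1 := huklow k j h
      have h2 := huk0 k j
      nlinarith
  have hF3 : ∀ k, en (A.mulVec (fun j => (uk k j : ℂ))) ≤
      dnorm A * Real.sqrt (2 * βsq k) := by
    intro k
    refine le_trans (en_mulVec_nonneg_le A hD (ck k) (uk k) (hckpos k) (huk0 k) (hukle k)) ?_
    exact mul_le_mul_of_nonneg_left (Real.sqrt_le_sqrt (hl1 k)) hD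
  have hF4 : ∀ k i, ‖A.mulVec (fun j => (uk k j : ℂ)) i‖ ≤ Rr A * ck k := by
    intro k i
    refine le_trans (norm_mulVec_apply_le A _ i) ?_
    calc ∑ j, ‖A i j‖ * ‖((uk k j : ℝ):ℂ)‖ ≤ ∑ j, ‖A i j‖ * ck k := by
          refine Finset.sum_le_sum fun j _ => ?_
          rw [Complex.norm_real, Real.norm_of_nonneg (huk0 k j)]
          exact mul_le_mul_of_nonneg_left (hukle k j) (norm_nonneg _)
      _ = (∑ j, ‖A i j‖) * ck k := by rw [Finset.sum_mul]
      _ ≤ Rr A * ck k := mul_le_mul_of_nonneg_right (rowsum_le_Rr A i) (le_of_lt (hckpos k))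
  have hF5 : ∀ k, ∑ i, ‖A.mulVec (fun j => (uk k j : ℂ)) i‖ ≤ Cc A * ∑ j, uk k j := by
    intro k
    have h1 := vn1_mulVec_le A (fun j => (uk k j : ℂ))
    rw [vn1, vn1] at h1
    refine le_trans h1 ?_
    refine mul_le_mul_of_nonneg_left (le_of_eq ?_) (Cc_nonneg A)
    refine Finset.sum_congr rfl fun j _ => ?_
    rw [Complex.norm_real, Real.norm_of_nonneg (huk0 k j)]
  -- inner product setup
  set wv : ℕ → EuclideanSpace ℂ (Fin m) :=
    fun k => (WithLp.equiv 2 (Fin m → ℂ)).symm (A.mulVec (fun j => (uk k j : ℂ))) with hwv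
  have hwnorm : ∀ k, ‖wv k‖ = en (A.mulVec (fun j => (uk k j : ℂ))) := fun k =>
    (en_eq_norm _).symm
  have hsum_w : en (A.mulVec (fun j => (u j : ℂ))) = ‖∑ k ∈ Finset.range T, wv k‖ := by
    rw [hsum_vec, mulVec_sum, en_eq_norm]
    exact congrArg norm (WithLp.toLp_sum 2 _ _ _)
  have hexp : ‖∑ k ∈ Finset.range T, wv k‖^2 =
      ∑ k ∈ Finset.range T, ∑ l ∈ Finset.range T,
        RCLike.re (inner ℂ (wv k) (wv l) : ℂ) := by
    rw [← inner_self_eq_norm_sq (𝕜 := ℂ)]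
    rw [sum_inner]
    rw [map_sum]
    refine Finset.sum_congr rfl fun k _ => ?_
    rw [inner_sum, map_sum]
  -- band bound
  have hband : ∀ k l, RCLike.re (inner ℂ (wv k) (wv l) : ℂ) ≤
      2 * dnorm A^2 * (Real.sqrt (βsq k) * Real.sqrt (βsq l)) := by
    intro k l
    refine le_trans (RCLike.re_le_norm _) ?_
    refine le_trans (norm_inner_le_norm _ _) ?_
    rw [hwnorm, hwnorm]
    have e2 : ∀ a, Real.sqrt (2 * βsq a) = Real.sqrt 2 * Real.sqrt (βsq a) := fun a =>
      Real.sqrt_mul (by norm_num) _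
    have h1 := hF3 k
    have h2 := hF3 l
    have hs2 : Real.sqrt 2 * Real.sqrt 2 = 2 := Real.mul_self_sqrt (by norm_num)
    calc en (A.mulVec (fun j => (uk k j : ℂ))) * en (A.mulVec (fun j => (uk l j : ℂ)))
        ≤ (dnorm A * Real.sqrt (2*βsq k)) * (dnorm A * Real.sqrt (2*βsq l)) := by
          exact mul_le_mul h1 h2 (en_nonneg _) (mul_nonneg hD (Real.sqrt_nonneg _))
      _ = 2 * dnorm A^2 * (Real.sqrt (βsq k) * Real.sqrt (βsq l)) := by
          rw [e2 k, e2 l]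
          have heq : (dnorm A * (Real.sqrt 2 * Real.sqrt (βsq k))) *
              (dnorm A * (Real.sqrt 2 * Real.sqrt (βsq l))) =
              (Real.sqrt 2 * Real.sqrt 2) * dnorm A^2 *
                (Real.sqrt (βsq k) * Real.sqrt (βsq l)) := by ring
          rw [heq, hs2]
  -- far bound (norm version)
  have hfarnorm : ∀ k l, k + W ≤ l → ‖(inner ℂ (wv k) (wv l) : ℂ)‖ ≤
      2 * (Rr A * Cc A) * (1/2)^(l-k) * βsq k := by
    intro k l hkl
    have hip : (inner ℂ (wv k) (wv l) : ℂ) =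
        ∑ i, (starRingEnd ℂ) (A.mulVec (fun j => (uk k j : ℂ)) i) *
          (A.mulVec (fun j => (uk l j : ℂ)) i) := by
      rw [PiLp.inner_apply]
      refine Finset.sum_congr rfl fun i _ => ?_
      rw [RCLike.inner_apply']
      rfl
    rw [hip]
    refine le_trans (norm_sum_le _ _) ?_
    have hterm : ∀ i, ‖(starRingEnd ℂ) (A.mulVec (fun j => (uk k j : ℂ)) i) *
        (A.mulVec (fun j => (uk l j : ℂ)) i)‖ ≤
        ‖A.mulVec (fun j => (uk k j : ℂ)) i‖ * (Rr A * ck l) := by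
      intro i
      rw [norm_mul, RCLike.norm_conj]
      exact mul_le_mul_of_nonneg_left (hF4 l i) (norm_nonneg _)
    refine le_trans (Finset.sum_le_sum fun i _ => hterm i) ?_
    rw [← Finset.sum_mul]
    have h5 := hF5 k
    have hstep : (∑ i, ‖A.mulVec (fun j => (uk k j : ℂ)) i‖) * (Rr A * ck l) ≤
        (Cc A * ∑ j, uk k j) * (Rr A * ck l) :=
      mul_le_mul_of_nonneg_right h5
        (mul_nonneg (Rr_nonneg A) (le_of_lt (hckpos l)))
    refine le_trans hstep ?_
    have hckl : ck l = (1/2)^(l-k) * ck k := by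
      simp only [hckdef]
      rw [← mul_assoc, ← pow_add]
      congr 2
      omega
    rw [hckl]
    have hfin : (Cc A * ∑ j, uk k j) * (Rr A * ((1/2)^(l-k) * ck k)) =
        (Rr A * Cc A) * (1/2)^(l-k) * (ck k * ∑ j, uk k j) := by ring
    rw [hfin]
    have := mul_le_mul_of_nonneg_left (hl1 k)
      (mul_nonneg (mul_nonneg (Rr_nonneg A) (Cc_nonneg A)) (by positivity : (0:ℝ) ≤ (1/2)^(l-k)))
    calc (Rr A * Cc A) * (1/2)^(l-k) * (ck k * ∑ j, uk k j)
        ≤ (Rr A * Cc A) * (1/2)^(l-k) * (2 * βsq k) := this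
      _ = 2 * (Rr A * Cc A) * (1/2)^(l-k) * βsq k := by ring
  -- pointwise trichotomy bound
  have hRC : 0 ≤ Rr A * Cc A := mul_nonneg (Rr_nonneg A) (Cc_nonneg A)
  have hpoint : ∀ k l, RCLike.re (inner ℂ (wv k) (wv l) : ℂ) ≤
      (if l < k + W ∧ k < l + W then 2 * dnorm A^2 *
          (Real.sqrt (βsq k) * Real.sqrt (βsq l)) else 0)
      + (if k + W ≤ l then 2 * (Rr A * Cc A) * (1/2)^(l-k) * βsq k else 0)
      + (if l + W ≤ k then 2 * (Rr A * Cc A) * (1/2)^(k-l) * βsq l else 0) := by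
    intro k l
    by_cases h1 : k + W ≤ l
    · have h2 : ¬(l < k + W ∧ k < l + W) := by omega
      have h3 : ¬(l + W ≤ k) := by omega
      rw [if_neg h2, if_pos h1, if_neg h3]
      have := le_trans (RCLike.re_le_norm _) (hfarnorm k l h1)
      linarith
    · by_cases h2 : l + W ≤ k
      · have h3 : ¬(l < k + W ∧ k < l + W) := by omega
        rw [if_neg h3, if_neg h1, if_pos h2]
        have hn : ‖(inner ℂ (wv k) (wv l) : ℂ)‖ = ‖(inner ℂ (wv l) (wv k) : ℂ)‖ :=
          norm_inner_symm _ _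
        have := le_trans (RCLike.re_le_norm _)
          (le_of_le_of_eq (le_of_eq hn) rfl)
        have hb := hfarnorm l k h2
        have := le_trans (RCLike.re_le_norm (inner ℂ (wv k) (wv l) : ℂ))
          (le_trans (le_of_eq hn) hb)
        linarith
      · have h3 : l < k + W ∧ k < l + W := by omega
        rw [if_pos h3, if_neg h1, if_neg h2]
        have := hband k l
        linarith
  -- summation bounds
  have hDsqnn : ∀ k, 0 ≤ dnorm A^2 * βsq k := fun k => mul_nonneg (sq_nonneg _) (hβnn k)
  have hcard_gen : ∀ a : ℕ, (((Finset.range T).filter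
      (fun b => b < a + W ∧ a < b + W)).card : ℝ) ≤ 2*(W:ℝ) - 1 := by
    intro a
    have h1 : ((Finset.range T).filter (fun b => b < a + W ∧ a < b + W)).card ≤ 2*W - 1 := by
      have hsub : (Finset.range T).filter (fun b => b < a + W ∧ a < b + W) ⊆
          Finset.Ico (a+1-W) (a+W) := by
        intro b hb
        simp only [Finset.mem_filter, Finset.mem_range] at hb
        exact Finset.mem_Ico.mpr (by omega)
      refine le_trans (Finset.card_le_card hsub) ?_
      rw [Nat.card_Ico]
      omega
    calc (((Finset.range T).filter (fun b => b < a + W ∧ a < b + W)).card : ℝ)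
        ≤ ((2*W - 1 : ℕ) : ℝ) := by exact_mod_cast h1
      _ = 2*(W:ℝ) - 1 := by
          have : (1:ℕ) ≤ 2*W := by omega
          push_cast [Nat.cast_sub this]
          ring
  have hinner1 : ∀ k, ∑ l ∈ Finset.range T,
      (if l < k + W ∧ k < l + W then dnorm A^2 * βsq k else 0) ≤
      (2*(W:ℝ) - 1) * (dnorm A^2 * βsq k) := by
    intro k
    rw [← Finset.sum_filter, Finset.sum_const, nsmul_eq_mul]
    exact mul_le_mul_of_nonneg_right (hcard_gen k) (hDsqnn k)
  have hinner2 : ∀ l, ∑ k ∈ Finset.range T,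
      (if l < k + W ∧ k < l + W then dnorm A^2 * βsq l else 0) ≤
      (2*(W:ℝ) - 1) * (dnorm A^2 * βsq l) := by
    intro l
    have he : (Finset.range T).filter (fun k => l < k + W ∧ k < l + W) =
        (Finset.range T).filter (fun k => k < l + W ∧ l < k + W) := by
      ext k
      simp only [Finset.mem_filter, Finset.mem_range]
      tauto
    rw [← Finset.sum_filter, he, Finset.sum_const, nsmul_eq_mul]
    exact mul_le_mul_of_nonneg_right (hcard_gen l) (hDsqnn l)
  have hS1 : ∑ k ∈ Finset.range T, ∑ l ∈ Finset.range T,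
      (if l < k + W ∧ k < l + W then 2 * dnorm A^2 *
        (Real.sqrt (βsq k) * Real.sqrt (βsq l)) else 0) ≤
      2 * (2*(W:ℝ) - 1) * dnorm A^2 * ∑ k ∈ Finset.range T, βsq k := by
    have hpoint1 : ∀ k l, (if l < k + W ∧ k < l + W then 2 * dnorm A^2 *
        (Real.sqrt (βsq k) * Real.sqrt (βsq l)) else 0) ≤
        (if l < k + W ∧ k < l + W then dnorm A^2 * βsq k else 0)
        + (if l < k + W ∧ k < l + W then dnorm A^2 * βsq l else 0) := by
      intro k l
      by_cases h : l < k + W ∧ k < l + W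
      · rw [if_pos h, if_pos h, if_pos h]
        have e1 : Real.sqrt (βsq k) ^ 2 = βsq k := Real.sq_sqrt (hβnn k)
        have e2 : Real.sqrt (βsq l) ^ 2 = βsq l := Real.sq_sqrt (hβnn l)
        nlinarith [sq_nonneg (Real.sqrt (βsq k) - Real.sqrt (βsq l)), sq_nonneg (dnorm A),
          mul_nonneg (sq_nonneg (dnorm A)) (sq_nonneg (Real.sqrt (βsq k) - Real.sqrt (βsq l)))]
      · rw [if_neg h, if_neg h, if_neg h]
        norm_num
    calc ∑ k ∈ Finset.range T, ∑ l ∈ Finset.range T,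
        (if l < k + W ∧ k < l + W then 2 * dnorm A^2 *
          (Real.sqrt (βsq k) * Real.sqrt (βsq l)) else 0)
        ≤ ∑ k ∈ Finset.range T, ∑ l ∈ Finset.range T,
          ((if l < k + W ∧ k < l + W then dnorm A^2 * βsq k else 0)
            + (if l < k + W ∧ k < l + W then dnorm A^2 * βsq l else 0)) :=
          Finset.sum_le_sum fun k _ => Finset.sum_le_sum fun l _ => hpoint1 k l
      _ = (∑ k ∈ Finset.range T, ∑ l ∈ Finset.range T,
            (if l < k + W ∧ k < l + W then dnorm A^2 * βsq k else 0))
          + ∑ k ∈ Finset.range T, ∑ l ∈ Finset.range T,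
            (if l < k + W ∧ k < l + W then dnorm A^2 * βsq l else 0) := by
          rw [← Finset.sum_add_distrib]
          exact Finset.sum_congr rfl fun k _ => Finset.sum_add_distrib
      _ ≤ (∑ k ∈ Finset.range T, (2*(W:ℝ) - 1) * (dnorm A^2 * βsq k))
          + ∑ l ∈ Finset.range T, (2*(W:ℝ) - 1) * (dnorm A^2 * βsq l) := by
          refine add_le_add (Finset.sum_le_sum fun k _ => hinner1 k) ?_
          rw [Finset.sum_comm]
          exact Finset.sum_le_sum fun l _ => hinner2 l
      _ = 2 * (2*(W:ℝ) - 1) * dnorm A^2 * ∑ k ∈ Finset.range T, βsq k := by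
          rw [← Finset.mul_sum, ← Finset.mul_sum]
          ring
  have hS2 : ∑ k ∈ Finset.range T, ∑ l ∈ Finset.range T,
      (if k + W ≤ l then 2 * (Rr A * Cc A) * (1/2)^(l-k) * βsq k else 0) ≤
      4 * (Rr A * Cc A) * (1/2)^W * ∑ k ∈ Finset.range T, βsq k := by
    rw [Finset.mul_sum]
    refine Finset.sum_le_sum fun k _ => ?_
    have hpull : ∀ l, (if k + W ≤ l then 2*(Rr A*Cc A)*(1/2)^(l-k)*βsq k else 0) =
        (2*(Rr A*Cc A)*βsq k) * (if k + W ≤ l then ((1:ℝ)/2)^(l-k) else 0) := by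
      intro l
      by_cases h : k + W ≤ l
      · rw [if_pos h, if_pos h]; ring
      · rw [if_neg h, if_neg h, mul_zero]
    rw [Finset.sum_congr rfl fun l _ => hpull l, ← Finset.mul_sum]
    have hcnn : 0 ≤ 2*(Rr A*Cc A)*βsq k :=
      mul_nonneg (mul_nonneg (by norm_num) hRC) (hβnn k)
    calc (2*(Rr A*Cc A)*βsq k) * ∑ l ∈ Finset.range T,
          (if k + W ≤ l then ((1:ℝ)/2)^(l-k) else 0)
        ≤ (2*(Rr A*Cc A)*βsq k) * (2*(1/2)^W) :=
          mul_le_mul_of_nonneg_left (geom_tail_le T k W) hcnn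
      _ = 4 * (Rr A * Cc A) * (1/2)^W * βsq k := by ring
  have hS3 : ∑ k ∈ Finset.range T, ∑ l ∈ Finset.range T,
      (if l + W ≤ k then 2 * (Rr A * Cc A) * (1/2)^(k-l) * βsq l else 0) ≤
      4 * (Rr A * Cc A) * (1/2)^W * ∑ k ∈ Finset.range T, βsq k := by
    rw [Finset.sum_comm, Finset.mul_sum]
    refine Finset.sum_le_sum fun l _ => ?_
    have hpull : ∀ k, (if l + W ≤ k then 2*(Rr A*Cc A)*(1/2)^(k-l)*βsq l else 0) =
        (2*(Rr A*Cc A)*βsq l) * (if l + W ≤ k then ((1:ℝ)/2)^(k-l) else 0) := by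
      intro k
      by_cases h : l + W ≤ k
      · rw [if_pos h, if_pos h]; ring
      · rw [if_neg h, if_neg h, mul_zero]
    rw [Finset.sum_congr rfl fun k _ => hpull k, ← Finset.mul_sum]
    have hcnn : 0 ≤ 2*(Rr A*Cc A)*βsq l :=
      mul_nonneg (mul_nonneg (by norm_num) hRC) (hβnn l)
    calc (2*(Rr A*Cc A)*βsq l) * ∑ k ∈ Finset.range T,
          (if l + W ≤ k then ((1:ℝ)/2)^(k-l) else 0)
        ≤ (2*(Rr A*Cc A)*βsq l) * (2*(1/2)^W) :=
          mul_le_mul_of_nonneg_left (geom_tail_le T l W) hcnn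
      _ = 4 * (Rr A * Cc A) * (1/2)^W * βsq l := by ring
  -- put everything together
  rw [hsum_w, hexp]
  calc ∑ k ∈ Finset.range T, ∑ l ∈ Finset.range T, RCLike.re (inner ℂ (wv k) (wv l) : ℂ)
      ≤ ∑ k ∈ Finset.range T, ∑ l ∈ Finset.range T,
        ((if l < k + W ∧ k < l + W then 2 * dnorm A^2 *
            (Real.sqrt (βsq k) * Real.sqrt (βsq l)) else 0)
        + (if k + W ≤ l then 2 * (Rr A * Cc A) * (1/2)^(l-k) * βsq k else 0)
        + (if l + W ≤ k then 2 * (Rr A * Cc A) * (1/2)^(k-l) * βsq l else 0)) :=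
        Finset.sum_le_sum fun k _ => Finset.sum_le_sum fun l _ => hpoint k l
    _ = (∑ k ∈ Finset.range T, ∑ l ∈ Finset.range T,
          (if l < k + W ∧ k < l + W then 2 * dnorm A^2 *
            (Real.sqrt (βsq k) * Real.sqrt (βsq l)) else 0))
        + (∑ k ∈ Finset.range T, ∑ l ∈ Finset.range T,
          (if k + W ≤ l then 2 * (Rr A * Cc A) * (1/2)^(l-k) * βsq k else 0))
        + ∑ k ∈ Finset.range T, ∑ l ∈ Finset.range T,
          (if l + W ≤ k then 2 * (Rr A * Cc A) * (1/2)^(k-l) * βsq l else 0) := by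
        rw [← Finset.sum_add_distrib, ← Finset.sum_add_distrib]
        refine Finset.sum_congr rfl fun k _ => ?_
        rw [← Finset.sum_add_distrib, ← Finset.sum_add_distrib]
    _ ≤ 2 * (2*(W:ℝ) - 1) * dnorm A^2 * (∑ k ∈ Finset.range T, βsq k)
        + 4 * (Rr A * Cc A) * (1/2)^W * (∑ k ∈ Finset.range T, βsq k)
        + 4 * (Rr A * Cc A) * (1/2)^W * (∑ k ∈ Finset.range T, βsq k) := by
        exact add_le_add (add_le_add hS1 hS2) hS3
    _ = (2 * (2*(W:ℝ) - 1) * dnorm A ^ 2 + 8 * (Rr A * Cc A) * (1/2)^W) *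
          ∑ j, u j ^ 2 := by
        rw [hβtotal]
        ring

end Quadratic

end Stmt8Aux
namespace Stmt8Aux

section Final

variable {m n : ℕ} (A : Matrix (Fin m) (Fin n) ℂ)

lemma en_sub_le {ι : Type*} [Fintype ι] (v w : ι → ℂ) : en (v - w) ≤ en v + en w := by
  rw [en_eq_norm, en_eq_norm, en_eq_norm]
  exact norm_sub_le _ _

lemma complex_bound (hD : 0 ≤ dnorm A) (W : ℕ) (hW : 1 ≤ W) (x : Fin n → ℂ) :
    en (A.mulVec x) ≤ 2 * Real.sqrt (2*(2*(W:ℝ)-1)*dnorm A^2 + 8*(Rr A*Cc A)*(1/2)^W)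
      * en x := by
  have hW1 : (1:ℝ) ≤ (W:ℝ) := by exact_mod_cast hW
  have hRC : 0 ≤ Rr A * Cc A := mul_nonneg (Rr_nonneg A) (Cc_nonneg A)
  set K : ℝ := 2*(2*(W:ℝ)-1)*dnorm A^2 + 8*(Rr A*Cc A)*(1/2)^W with hKdef
  have hKnn : 0 ≤ K := by
    rw [hKdef]
    have h3 : (0:ℝ) ≤ ((1:ℝ)/2)^W := by positivity
    nlinarith [sq_nonneg (dnorm A)]
  set u1 : Fin n → ℝ := fun j => max (x j).re 0 with hu1
  set u2 : Fin n → ℝ := fun j => max (-(x j).re) 0 with hu2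
  set u3 : Fin n → ℝ := fun j => max (x j).im 0 with hu3
  set u4 : Fin n → ℝ := fun j => max (-(x j).im) 0 with hu4
  have hnn : (∀ j, 0 ≤ u1 j) ∧ (∀ j, 0 ≤ u2 j) ∧ (∀ j, 0 ≤ u3 j) ∧ (∀ j, 0 ≤ u4 j) :=
    ⟨fun j => le_max_right _ _, fun j => le_max_right _ _,
     fun j => le_max_right _ _, fun j => le_max_right _ _⟩
  have hdecomp : x = ((fun j => (u1 j : ℂ)) - (fun j => (u2 j : ℂ)))
      + Complex.I • ((fun j => (u3 j : ℂ)) - (fun j => (u4 j : ℂ))) := by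
    funext j
    simp only [Pi.add_apply, Pi.sub_apply, Pi.smul_apply, smul_eq_mul]
    have h1 : u1 j - u2 j = (x j).re := by
      simp only [hu1, hu2]
      rcases le_total 0 (x j).re with h | h
      · rw [max_eq_left h, max_eq_right (by linarith)]; ring
      · rw [max_eq_right h, max_eq_left (by linarith)]; ring
    have h2 : u3 j - u4 j = (x j).im := by
      simp only [hu3, hu4]
      rcases le_total 0 (x j).im with h | h
      · rw [max_eq_left h, max_eq_right (by linarith)]; ring
      · rw [max_eq_right h, max_eq_left (by linarith)]; ring
    have := Complex.re_add_im (x j)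
    rw [← this]
    push_cast [← h1, ← h2]
    ring
  have htri : en (A.mulVec x) ≤
      en (A.mulVec (fun j => (u1 j : ℂ))) + en (A.mulVec (fun j => (u2 j : ℂ)))
      + (en (A.mulVec (fun j => (u3 j : ℂ))) + en (A.mulVec (fun j => (u4 j : ℂ)))) := by
    conv_lhs => rw [hdecomp]
    rw [Matrix.mulVec_add, Matrix.mulVec_smul, Matrix.mulVec_sub, Matrix.mulVec_sub]
    refine le_trans (en_add_le _ _) ?_
    rw [en_smul, Complex.norm_I, one_mul]
    exact add_le_add (en_sub_le _ _) (en_sub_le _ _)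
  have hquad : ∀ (u : Fin n → ℝ), (∀ j, 0 ≤ u j) →
      en (A.mulVec (fun j => (u j : ℂ))) ≤ Real.sqrt K * Real.sqrt (∑ j, u j ^ 2) := by
    intro u h0
    have h1 := nonneg_quadratic A hD W hW u h0
    have h2 : en (A.mulVec (fun j => (u j : ℂ))) =
        Real.sqrt (en (A.mulVec (fun j => (u j : ℂ))) ^ 2) :=
      (Real.sqrt_sq (en_nonneg _)).symm
    rw [h2]
    refine le_trans (Real.sqrt_le_sqrt h1) ?_
    rw [← hKdef, Real.sqrt_mul hKnn]
  have hsq : ∑ j, u1 j ^2 + ∑ j, u2 j^2 + (∑ j, u3 j^2 + ∑ j, u4 j^2) = en x ^ 2 := by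
    rw [sq_en]
    rw [← Finset.sum_add_distrib, ← Finset.sum_add_distrib, ← Finset.sum_add_distrib]
    refine Finset.sum_congr rfl fun j _ => ?_
    have hre : u1 j ^2 + u2 j^2 = (x j).re^2 := by
      simp only [hu1, hu2]
      rcases le_total 0 (x j).re with h | h
      · rw [max_eq_left h, max_eq_right (by linarith)]; ring
      · rw [max_eq_right h, max_eq_left (by linarith)]; ring
    have him : u3 j ^2 + u4 j^2 = (x j).im^2 := by
      simp only [hu3, hu4]
      rcases le_total 0 (x j).im with h | h
      · rw [max_eq_left h, max_eq_right (by linarith)]; ring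
      · rw [max_eq_right h, max_eq_left (by linarith)]; ring
    have habs : ‖x j‖^2 = (x j).re^2 + (x j).im^2 := by
      rw [Complex.sq_norm, Complex.normSq_apply]; ring
    rw [habs]
    linarith
  -- combine
  have hs12 : Real.sqrt (∑ j, u1 j ^2) + Real.sqrt (∑ j, u2 j^2) ≤
      Real.sqrt (2 * (∑ j, u1 j ^2 + ∑ j, u2 j^2)) :=
    sqrt_add_sqrt_le _ _ (Finset.sum_nonneg fun j _ => sq_nonneg _)
      (Finset.sum_nonneg fun j _ => sq_nonneg _)
  have hs34 : Real.sqrt (∑ j, u3 j ^2) + Real.sqrt (∑ j, u4 j^2) ≤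
      Real.sqrt (2 * (∑ j, u3 j ^2 + ∑ j, u4 j^2)) :=
    sqrt_add_sqrt_le _ _ (Finset.sum_nonneg fun j _ => sq_nonneg _)
      (Finset.sum_nonneg fun j _ => sq_nonneg _)
  have hsfin : Real.sqrt (2 * (∑ j, u1 j ^2 + ∑ j, u2 j^2))
      + Real.sqrt (2 * (∑ j, u3 j ^2 + ∑ j, u4 j^2)) ≤
      Real.sqrt (2 * (2 * (∑ j, u1 j ^2 + ∑ j, u2 j^2) + 2 * (∑ j, u3 j ^2 + ∑ j, u4 j^2))) := by
    have q1 : (0:ℝ) ≤ ∑ j, u1 j ^2 := Finset.sum_nonneg fun j _ => sq_nonneg _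
    have q2 : (0:ℝ) ≤ ∑ j, u2 j ^2 := Finset.sum_nonneg fun j _ => sq_nonneg _
    have q3 : (0:ℝ) ≤ ∑ j, u3 j ^2 := Finset.sum_nonneg fun j _ => sq_nonneg _
    have q4 : (0:ℝ) ≤ ∑ j, u4 j ^2 := Finset.sum_nonneg fun j _ => sq_nonneg _
    refine sqrt_add_sqrt_le _ _ (by linarith) (by linarith)
  have hsum4 : Real.sqrt (∑ j, u1 j ^2) + Real.sqrt (∑ j, u2 j^2)
      + (Real.sqrt (∑ j, u3 j ^2) + Real.sqrt (∑ j, u4 j^2)) ≤ 2 * en x := by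
    refine le_trans (add_le_add hs12 hs34) ?_
    refine le_trans hsfin ?_
    have he : 2 * (2 * (∑ j, u1 j ^2 + ∑ j, u2 j^2) + 2 * (∑ j, u3 j ^2 + ∑ j, u4 j^2)) =
        4 * en x ^ 2 := by rw [← hsq]; ring
    rw [he, show (4:ℝ) * en x ^2 = (2 * en x)^2 by ring]
    exact le_of_eq (Real.sqrt_sq (by linarith [en_nonneg x]))
  calc en (A.mulVec x) ≤
      en (A.mulVec (fun j => (u1 j : ℂ))) + en (A.mulVec (fun j => (u2 j : ℂ)))
      + (en (A.mulVec (fun j => (u3 j : ℂ))) + en (A.mulVec (fun j => (u4 j : ℂ)))) := htri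
    _ ≤ Real.sqrt K * Real.sqrt (∑ j, u1 j ^2) + Real.sqrt K * Real.sqrt (∑ j, u2 j^2)
        + (Real.sqrt K * Real.sqrt (∑ j, u3 j ^2) + Real.sqrt K * Real.sqrt (∑ j, u4 j^2)) := by
        refine add_le_add (add_le_add (hquad u1 hnn.1) (hquad u2 hnn.2.1))
          (add_le_add (hquad u3 hnn.2.2.1) (hquad u4 hnn.2.2.2))
    _ = Real.sqrt K * (Real.sqrt (∑ j, u1 j ^2) + Real.sqrt (∑ j, u2 j^2)
        + (Real.sqrt (∑ j, u3 j ^2) + Real.sqrt (∑ j, u4 j^2))) := by ring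
    _ ≤ Real.sqrt K * (2 * en x) :=
        mul_le_mul_of_nonneg_left hsum4 (Real.sqrt_nonneg _)
    _ = 2 * Real.sqrt K * en x := by ring

lemma opNorm2_pos (hA : A ≠ 0) : 0 < opNorm2 A := by
  have hex : ∃ i j, A i j ≠ 0 := by
    by_contra h
    push_neg at h
    exact hA (Matrix.ext fun i j => h i j)
  obtain ⟨i0, j0, hij⟩ := hex
  set x : Fin n → ℂ := fun k => if k = j0 then 1 else 0 with hx
  have h1 : A.mulVec x i0 = A i0 j0 := by
    rw [mulVec_apply, hx]
    rw [Finset.sum_eq_single j0]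
    · simp
    · intro k _ hk; simp [hk]
    · intro h; exact absurd (Finset.mem_univ j0) h
  have h2 : en x = 1 := by
    rw [en]
    have : ∑ k, ‖x k‖^2 = 1 := by
      rw [hx, Finset.sum_eq_single j0]
      · simp
      · intro k _ hk; simp [hk]
      · intro h; exact absurd (Finset.mem_univ j0) h
    rw [this, Real.sqrt_one]
  have h3 : 0 < en (A.mulVec x) := by
    refine lt_of_lt_of_le ?_ (coord_le_en _ i0)
    rw [h1]
    exact norm_pos_iff.mpr hij
  have h4 := opNorm2_apply A x
  rw [h2, mul_one] at h4
  linarith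

end Final

end Stmt8Aux

set_option maxHeartbeats 1600000 in
open Stmt8Aux in
theorem stmt8 {m n : ℕ} (A : Matrix (Fin m) (Fin n) ℂ) (hA : A ≠ 0) :
    opNorm2 A / (8 * Real.sqrt 2 * Real.sqrt (Real.log (height A) + 2)) ≤
        dnorm A ∧ dnorm A ≤ opNorm2 A := by
  have hn : 0 < n := by
    rcases Nat.eq_zero_or_pos n with h | h
    · subst h
      exact absurd (Matrix.ext fun i j => j.elim0) hA
    · exact h
  have hm : 0 < m := by
    rcases Nat.eq_zero_or_pos m with h | h
    · subst h
      exact absurd (Matrix.ext fun i j => i.elim0) hA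
    · exact h
  refine ⟨?_, dnorm_le_opNorm2 A hn⟩
  -- notation
  have hN : 0 < opNorm2 A := opNorm2_pos A hA
  have hD0 : 0 ≤ dnorm A := dnorm_nonneg A hn
  have hQ2nn : 0 ≤ opNorm1 A * opNormInf A :=
    mul_nonneg (opNorm1_nonneg A) (opNormInf_nonneg A)
  have hRC : 0 ≤ Rr A * Cc A := mul_nonneg (Rr_nonneg A) (Cc_nonneg A)
  have hRCle : Rr A * Cc A ≤ opNorm1 A * opNormInf A := by
    calc Rr A * Cc A ≤ opNormInf A * Cc A :=
          mul_le_mul_of_nonneg_right (Rr_le_opNormInf A hn) (Cc_nonneg A)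
      _ ≤ opNormInf A * opNorm1 A :=
          mul_le_mul_of_nonneg_left (Cc_le_opNorm1 A hm) (opNormInf_nonneg A)
      _ = opNorm1 A * opNormInf A := mul_comm _ _
  have hSchur : opNorm2 A ≤ Real.sqrt (Rr A * Cc A) :=
    opNorm2_le A (Real.sqrt_nonneg _) (en_mulVec_le_sqrt_RC A)
  have hNQ : opNorm2 A ≤ Real.sqrt (opNorm1 A * opNormInf A) :=
    le_trans hSchur (Real.sqrt_le_sqrt hRCle)
  set h : ℝ := height A with hhdef
  have hheq : h = Real.sqrt (opNorm1 A * opNormInf A) / opNorm2 A := rfl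
  have hh1 : 1 ≤ h := by
    rw [hheq]
    exact (one_le_div hN).mpr hNQ
  have hhpos : 0 < h := lt_of_lt_of_le zero_lt_one hh1
  have hlogh : 0 ≤ Real.log h := Real.log_nonneg hh1
  have hQ2eq : opNorm1 A * opNormInf A = h^2 * opNorm2 A^2 := by
    have e1 : Real.sqrt (opNorm1 A * opNormInf A) = h * opNorm2 A := by
      rw [hheq, div_mul_cancel₀]
      exact ne_of_gt hN
    have e2 := Real.sq_sqrt hQ2nn
    rw [← e2, e1]
    ring
  -- choice of W
  have harg1 : (1:ℝ) ≤ 64 * h^2 := by nlinarith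
  have hargpos : (0:ℝ) < 64 * h^2 := by nlinarith
  set W : ℕ := ⌈Real.logb 2 (64 * h^2)⌉₊ with hWdef
  have hlogbnn : 0 ≤ Real.logb 2 (64*h^2) := Real.logb_nonneg (by norm_num) harg1
  have hW1 : 1 ≤ W := by
    have h1 : (0:ℝ) < Real.logb 2 (64*h^2) := by
      refine Real.logb_pos (by norm_num) ?_
      nlinarith
    rw [hWdef]
    exact Nat.one_le_ceil_iff.mpr h1
  have hWle : (W:ℝ) ≤ Real.logb 2 (64*h^2) + 1 := by
    rw [hWdef]
    exact le_of_lt (Nat.ceil_lt_add_one hlogbnn)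
  have hWge : Real.logb 2 (64*h^2) ≤ (W:ℝ) := by
    rw [hWdef]
    exact Nat.le_ceil _
  have h2W : 64 * h^2 ≤ (2:ℝ)^W := by
    have h1 : (2:ℝ) ^ Real.logb 2 (64*h^2) ≤ (2:ℝ) ^ ((W:ℕ):ℝ) :=
      (Real.rpow_le_rpow_left_iff (by norm_num)).mpr hWge
    rw [Real.rpow_logb (by norm_num) (by norm_num) hargpos, Real.rpow_natCast] at h1
    exact h1
  have hhalfW : (1/2:ℝ)^W * (64*h^2) ≤ 1 := by
    have hp : (0:ℝ) < (2:ℝ)^W := by positivity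
    have he : (1/2:ℝ)^W = ((2:ℝ)^W)⁻¹ := by
      rw [div_pow, one_pow, one_div]
    rw [he]
    rw [inv_mul_le_iff₀ hp, mul_one]
    exact h2W
  -- main inequality
  set K : ℝ := 2*(2*(W:ℝ)-1)*dnorm A^2 + 8*(Rr A*Cc A)*(1/2)^W with hKdef
  have hW1R : (1:ℝ) ≤ (W:ℝ) := by exact_mod_cast hW1
  have hKnn : 0 ≤ K := by
    rw [hKdef]
    have h3 : (0:ℝ) ≤ ((1:ℝ)/2)^W := by positivity
    nlinarith [sq_nonneg (dnorm A)]
  have hNle : opNorm2 A ≤ 2 * Real.sqrt K := by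
    refine opNorm2_le A (by positivity) ?_
    intro x
    exact complex_bound A hD0 W hW1 x
  have hN2 : opNorm2 A^2 ≤ 4 * K := by
    have hs := Real.sq_sqrt hKnn
    nlinarith [Real.sqrt_nonneg K]
  -- absorb the far term
  have habsorb : 8 * (Rr A * Cc A) * (1/2)^W ≤ opNorm2 A^2 / 8 := by
    have h1 : 8 * (Rr A * Cc A) * (1/2)^W ≤ 8 * (h^2 * opNorm2 A^2) * (1/2)^W := by
      have h4 : (Rr A * Cc A) * (1/2)^W ≤ (h^2 * opNorm2 A^2) * (1/2)^W := by
        refine mul_le_mul_of_nonneg_right ?_ (by positivity)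
        rw [← hQ2eq]
        exact hRCle
      linarith
    refine le_trans h1 ?_
    have h2 : (1/2:ℝ)^W * (64*h^2) * (opNorm2 A^2/8) ≤ 1 * (opNorm2 A^2/8) :=
      mul_le_mul_of_nonneg_right hhalfW (div_nonneg (sq_nonneg _) (by norm_num))
    calc 8 * (h^2 * opNorm2 A^2) * (1/2)^W
        = (1/2:ℝ)^W * (64*h^2) * (opNorm2 A^2/8) := by ring
      _ ≤ 1 * (opNorm2 A^2/8) := h2
      _ = opNorm2 A^2/8 := one_mul _
  have hN2b : opNorm2 A^2 ≤ 16 * (2*(W:ℝ)-1) * dnorm A^2 := by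
    rw [hKdef] at hN2
    linarith [habsorb]
  -- numeric estimate on W
  have hlog2 : (0.6931471803:ℝ) < Real.log 2 := Real.log_two_gt_d9
  have hlog2pos : (0:ℝ) < Real.log 2 := by linarith
  have hlogb_expand : Real.logb 2 (64*h^2) = (6 * Real.log 2 + 2 * Real.log h) / Real.log 2 := by
    rw [Real.logb, Real.log_mul (by norm_num) (by positivity)]
    congr 2
    · rw [show (64:ℝ) = 2^6 by norm_num, Real.log_pow]
      push_cast
      ring
    · rw [Real.log_pow]
      push_cast
      ring
  have hWlog : (W:ℝ) * Real.log 2 ≤ 7 * Real.log 2 + 2 * Real.log h := by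
    have h1 : (W:ℝ) ≤ (6 * Real.log 2 + 2 * Real.log h) / Real.log 2 + 1 := by
      rw [← hlogb_expand]
      exact hWle
    have h2 := mul_le_mul_of_nonneg_right h1 (le_of_lt hlog2pos)
    rw [add_mul, div_mul_cancel₀ _ (ne_of_gt hlog2pos)] at h2
    linarith
  have hkey : 16 * (2*(W:ℝ)-1) ≤ 128 * (Real.log h + 2) := by
    nlinarith [mul_nonneg hlogh (by linarith : (0:ℝ) ≤ Real.log 2 - 0.5), hlog2pos]
  have hfinal : opNorm2 A^2 ≤ 128 * (Real.log h + 2) * dnorm A^2 := by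
    refine le_trans hN2b ?_
    exact mul_le_mul_of_nonneg_right hkey (sq_nonneg _)
  -- conclude
  have hLpos : (0:ℝ) < Real.log h + 2 := by linarith
  have hdenpos : (0:ℝ) < 8 * Real.sqrt 2 * Real.sqrt (Real.log h + 2) := by positivity
  rw [div_le_iff₀ hdenpos]
  have hrhs_sq : (dnorm A * (8 * Real.sqrt 2 * Real.sqrt (Real.log h + 2)))^2 =
      128 * (Real.log h + 2) * dnorm A^2 := by
    have e1 : Real.sqrt 2 ^2 = 2 := Real.sq_sqrt (by norm_num)
    have e2 : Real.sqrt (Real.log h + 2) ^2 = Real.log h + 2 :=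
      Real.sq_sqrt (le_of_lt hLpos)
    calc (dnorm A * (8 * Real.sqrt 2 * Real.sqrt (Real.log h + 2)))^2
        = 64 * (Real.sqrt 2^2) * (Real.sqrt (Real.log h + 2)^2) * dnorm A^2 := by ring
      _ = 128 * (Real.log h + 2) * dnorm A^2 := by rw [e1, e2]; ring
  calc opNorm2 A = Real.sqrt (opNorm2 A^2) := (Real.sqrt_sq (le_of_lt hN)).symm
    _ ≤ Real.sqrt ((dnorm A * (8 * Real.sqrt 2 * Real.sqrt (Real.log h + 2)))^2) := by
        refine Real.sqrt_le_sqrt ?_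
        rw [hrhs_sq]
        exact hfinal
    _ = dnorm A * (8 * Real.sqrt 2 * Real.sqrt (Real.log h + 2)) :=
        Real.sqrt_sq (by positivity)
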